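/- Let n ≥ 2 and let Ω ⊂ ℝⁿ be an open set such that 0 < xₙ < e^{−1} for all x = (x′, xₙ) ∈ Ω. Define v(x) = xₙ·[(−log xₙ)^{1/n} − 1]·(|x′|² − 1) for x ∈ Ω. Then v is smooth in Ω and det D²v(x) ≤ 2ⁿ · xₙ^{n−2} for all x ∈ Ω. -/

import Mathlib

open Metric MeasureTheory Real

/-- The Hessian matrix of `u : ℝⁿ → ℝ` at `x`, with entries the second partial
derivatives `∂²u/∂xᵢ∂xⱼ` computed via iterated Fréchet derivatives. -/
noncomputable def hessianMatrix {n : ℕ} (u : EuclideanSpace ℝ (Fin n) → ℝ)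
    (x : EuclideanSpace ℝ (Fin n)) : Matrix (Fin n) (Fin n) ℝ :=
  Matrix.of fun i j =>
    fderiv ℝ (fun y => fderiv ℝ u y (EuclideanSpace.single j 1)) x (EuclideanSpace.single i 1)

/-- The determinant of the Hessian matrix, `det D²u(x)`. -/
noncomputable def hessianDet {n : ℕ} (u : EuclideanSpace ℝ (Fin n) → ℝ)
    (x : EuclideanSpace ℝ (Fin n)) : ℝ := (hessianMatrix u x).det

namespace Stmt13Aux

open Finset

/-! ### Scalar functions and their derivatives -/

noncomputable def gg (c t : ℝ) : ℝ := (-Real.log t) ^ c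
noncomputable def ff (c t : ℝ) : ℝ := t * (gg c t - 1)
noncomputable def ff1 (c t : ℝ) : ℝ := (gg c t - 1) - c * (-Real.log t) ^ (c - 1)
noncomputable def ff2 (c t : ℝ) : ℝ :=
  -(c / t) * (-Real.log t) ^ (c - 2) * ((-Real.log t) + 1 - c)

section scalar
variable {c t : ℝ}

lemma hL (ht0 : 0 < t) (ht1 : t < Real.exp (-1)) : 1 < -Real.log t := by
  have := Real.log_lt_log ht0 ht1
  rw [Real.log_exp] at this; linarith

lemma hasDerivAt_pL (ht0 : 0 < t) (hL1 : 1 < -Real.log t) (p : ℝ) :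
    HasDerivAt (fun s => (-Real.log s) ^ p) (p * (-Real.log t) ^ (p - 1) * (-t⁻¹)) t := by
  have h1 : HasDerivAt (fun s => -Real.log s) (-t⁻¹) t := (Real.hasDerivAt_log ht0.ne').neg
  have h2 := Real.hasDerivAt_rpow_const (x := -Real.log t) (p := p) (Or.inl (by linarith))
  exact (h2.comp t h1 :)

lemma hasDerivAt_ff (ht0 : 0 < t) (hL1 : 1 < -Real.log t) :
    HasDerivAt (ff c) (ff1 c t) t := by
  have hg := hasDerivAt_pL ht0 hL1 c
  have h : HasDerivAt (fun s => s * (gg c s - 1))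
      (t * (c * (-Real.log t) ^ (c - 1) * (-t⁻¹)) + (gg c t - 1) * 1) t := by
    have := (hasDerivAt_id t).fun_mul ((hg.sub_const 1) :)
    refine this.congr_deriv ?_
    simp only [gg, id]
    ring
  have heq : t * (c * (-Real.log t) ^ (c - 1) * (-t⁻¹)) + (gg c t - 1) * 1 = ff1 c t := by
    unfold ff1
    field_simp
    ring
  rw [heq] at h
  exact h

lemma hasDerivAt_ff1 (ht0 : 0 < t) (hL1 : 1 < -Real.log t) :
    HasDerivAt (ff1 c) (ff2 c t) t := by
  have hg := hasDerivAt_pL ht0 hL1 c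
  have hg1 := hasDerivAt_pL ht0 hL1 (c - 1)
  have h : HasDerivAt (ff1 c)
      ((c * (-Real.log t) ^ (c - 1) * (-t⁻¹)) -
        c * ((c-1) * (-Real.log t) ^ (c - 1 - 1) * (-t⁻¹))) t :=
    ((hg.sub_const 1).sub (hg1.const_mul c) :)
  convert h using 1
  unfold ff2
  have hLpos : (0:ℝ) < -Real.log t := by linarith
  have e1 : (-Real.log t) ^ (c - 1) = (-Real.log t) ^ (c - 2) * (-Real.log t) := by
    rw [← Real.rpow_add_one hLpos.ne']; ring_nf
  rw [e1]
  have h2 : c - 1 - 1 = c - 2 := by ring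
  rw [h2]
  field_simp
  ring

lemma contDiffAt_ff (ht0 : 0 < t) (hL1 : 1 < -Real.log t) :
    ContDiffAt ℝ (⊤ : ℕ∞) (ff c) t := by
  have h1 : ContDiffAt ℝ (⊤ : ℕ∞) (fun s => -Real.log s) t :=
    (Real.contDiffAt_log.mpr ht0.ne').neg
  have h2 : ContDiffAt ℝ (⊤ : ℕ∞) (fun s : ℝ => s ^ c) (-Real.log t) :=
    Real.contDiffAt_rpow_const_of_ne (by linarith)
  exact contDiffAt_id.mul ((h2.comp t h1).sub contDiffAt_const)

lemma gg_gt_one (hc : 0 < c) (hL1 : 1 < -Real.log t) : 1 < gg c t :=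
  Real.one_lt_rpow_iff_of_pos (by linarith) |>.mpr (Or.inl ⟨hL1, hc⟩)

lemma ff_pos (hc : 0 < c) (ht0 : 0 < t) (hL1 : 1 < -Real.log t) : 0 < ff c t :=
  mul_pos ht0 (by linarith [gg_gt_one hc hL1])

lemma ff2_neg (hc : 0 < c) (hc1 : c < 1) (ht0 : 0 < t) (hL1 : 1 < -Real.log t) :
    ff2 c t < 0 := by
  unfold ff2
  have h1 : (0:ℝ) < (-Real.log t) ^ (c - 2) := Real.rpow_pos_of_pos (by linarith) _
  have h2 : (0:ℝ) < c / t := div_pos hc ht0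
  nlinarith [mul_pos (mul_pos h2 h1) (show (0:ℝ) < -Real.log t + 1 - c by linarith)]

lemma key_bound {n : ℕ} (hn : 2 ≤ n) (hc : c = 1 / n) (ht0 : 0 < t)
    (hL1 : 1 < -Real.log t) :
    ff c t ^ (n - 1) * (-ff2 c t) ≤ 2 * t ^ (n - 2) := by
  set L := -Real.log t with hLdef
  have hL0 : (0:ℝ) < L := by linarith
  have hn0 : (n:ℝ) ≠ 0 := Nat.cast_ne_zero.mpr (by omega)
  have hc0 : 0 < c := by rw [hc]; positivity
  have hc1 : c < 1 := by
    rw [hc]; rw [div_lt_one (by positivity)]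
    exact_mod_cast (by omega : 1 < n)
  have hg1 : 1 < gg c t := gg_gt_one hc0 hL1
  have e1 : ff c t ^ (n-1) = t ^ (n-1) * (gg c t - 1) ^ (n-1) := by
    rw [ff, mul_pow]
  have e2 : (gg c t - 1) ^ (n-1) ≤ L ^ ((1:ℝ) - c) := by
    have h1 : (gg c t - 1) ^ (n-1) ≤ (gg c t) ^ (n-1) :=
      pow_le_pow_left₀ (by linarith) (by linarith) _
    have h2 : (gg c t) ^ (n-1) = L ^ ((1:ℝ) - c) := by
      rw [gg, ← Real.rpow_natCast (L ^ c) (n-1), ← Real.rpow_mul hL0.le]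
      congr 1
      have : ((n-1:ℕ):ℝ) = (n:ℝ) - 1 := by
        rw [Nat.cast_sub (by omega)]; norm_num
      rw [this, hc]
      field_simp
    linarith [h2 ▸ h1]
  have e3 : -ff2 c t = (c/t) * L ^ (c-(2:ℝ)) * (L + 1 - c) := by
    rw [ff2]; ring
  have hL2 : (0:ℝ) < L ^ (c-(2:ℝ)) := Real.rpow_pos_of_pos hL0 _
  have hLc : (0:ℝ) < L + 1 - c := by linarith
  have step : ff c t ^ (n-1) * (-ff2 c t) ≤
      (t ^ (n-1) * L ^ ((1:ℝ)-c)) * ((c/t) * L ^ (c-(2:ℝ)) * (L + 1 - c)) := by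
    rw [e1, e3]
    apply mul_le_mul_of_nonneg_right _ (by positivity)
    have := mul_le_mul_of_nonneg_left e2 (pow_nonneg ht0.le (n-1))
    linarith
  have e4 : (t ^ (n-1) * L ^ ((1:ℝ)-c)) * ((c/t) * L ^ (c-(2:ℝ)) * (L + 1 - c)) =
      c * t ^ (n-2) * (L⁻¹ * (L + 1 - c)) := by
    have ht : t ^ (n-1) = t ^ (n-2) * t := by
      rw [← pow_succ]; congr 1; omega
    have hLL : L ^ ((1:ℝ)-c) * L ^ (c-(2:ℝ)) = L⁻¹ := by
      rw [← Real.rpow_add hL0]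
      norm_num [Real.rpow_neg_one]
    calc (t ^ (n-1) * L ^ ((1:ℝ)-c)) * ((c/t) * L ^ (c-(2:ℝ)) * (L + 1 - c))
        = (t ^ (n-1) * (c/t)) * (L ^ ((1:ℝ)-c) * L ^ (c-(2:ℝ))) * (L + 1 - c) := by ring
      _ = c * t ^ (n-2) * (L⁻¹ * (L + 1 - c)) := by
          rw [hLL, ht]; field_simp
  rw [e4] at step
  have h5 : L⁻¹ * (L + 1 - c) ≤ 2 := by
    rw [inv_mul_le_iff₀ hL0]; linarith
  have h6 : c * t ^ (n-2) * (L⁻¹ * (L + 1 - c)) ≤ 2 * t ^ (n-2) := by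
    have hpos : (0:ℝ) ≤ t ^ (n-2) := pow_nonneg ht0.le _
    calc c * t ^ (n-2) * (L⁻¹ * (L + 1 - c)) ≤ c * t ^ (n-2) * 2 :=
          mul_le_mul_of_nonneg_left h5 (by positivity)
      _ ≤ 1 * t ^ (n-2) * 2 := by nlinarith
      _ = 2 * t ^ (n-2) := by ring
  linarith

end scalar

/-! ### Euclidean-space derivatives -/

section euc
variable {n : ℕ} (N : Fin n)

lemma proj_apply' (i : Fin n) (x : EuclideanSpace ℝ (Fin n)) :
    (EuclideanSpace.proj (𝕜 := ℝ) i) x = x i := rfl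

noncomputable def SS (y : EuclideanSpace ℝ (Fin n)) : ℝ := ∑ i ∈ univ.erase N, y i ^ 2

noncomputable def DS (y : EuclideanSpace ℝ (Fin n)) : EuclideanSpace ℝ (Fin n) →L[ℝ] ℝ :=
  ∑ i ∈ univ.erase N, (2 * y i) • EuclideanSpace.proj i

lemma hasFDerivAt_SS (y : EuclideanSpace ℝ (Fin n)) : HasFDerivAt (SS N) (DS N y) y := by
  have h : ∀ i ∈ univ.erase N, HasFDerivAt (fun z : EuclideanSpace ℝ (Fin n) => z i ^ 2)
      ((2 * y i) • (EuclideanSpace.proj i : EuclideanSpace ℝ (Fin n) →L[ℝ] ℝ)) y := by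
    intro i _
    have h1 := (hasDerivAt_pow 2 (y i)).comp_hasFDerivAt y
      (EuclideanSpace.proj i : EuclideanSpace ℝ (Fin n) →L[ℝ] ℝ).hasFDerivAt
    simpa [Function.comp_def] using h1
  exact HasFDerivAt.fun_sum h

lemma DS_apply (y : EuclideanSpace ℝ (Fin n)) (j : Fin n) :
    (DS N y) (EuclideanSpace.single j (1:ℝ)) = if j = N then 0 else 2 * y j := by
  simp only [DS, ContinuousLinearMap.sum_apply, ContinuousLinearMap.smul_apply,
    proj_apply', EuclideanSpace.single_apply, smul_eq_mul, mul_ite, mul_one, mul_zero]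
  rw [Finset.sum_ite_eq' (univ.erase N) j]
  simp [Finset.mem_erase]

noncomputable def Dv (F F' : ℝ → ℝ) (y : EuclideanSpace ℝ (Fin n)) :
    EuclideanSpace ℝ (Fin n) →L[ℝ] ℝ :=
  F (y N) • DS N y + (SS N y - 1) •
    (F' (y N) • (EuclideanSpace.proj N : EuclideanSpace ℝ (Fin n) →L[ℝ] ℝ))

lemma hasFDerivAt_vgen (F F' : ℝ → ℝ) (y : EuclideanSpace ℝ (Fin n))
    (hF : HasDerivAt F (F' (y N)) (y N)) :
    HasFDerivAt (fun z => F (z N) * (SS N z - 1)) (Dv N F F' y) y := by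
  have h1 : HasFDerivAt (fun z : EuclideanSpace ℝ (Fin n) => F (z N))
      (F' (y N) • (EuclideanSpace.proj (𝕜 := ℝ) N)) y := by
    have hp : HasFDerivAt (fun z : EuclideanSpace ℝ (Fin n) => z N)
        (EuclideanSpace.proj (𝕜 := ℝ) N) y := (EuclideanSpace.proj (𝕜 := ℝ) N).hasFDerivAt
    exact hF.comp_hasFDerivAt y hp
  have h2 : HasFDerivAt (fun z => SS N z - 1) (DS N y) y := (hasFDerivAt_SS N y).sub_const 1
  exact (h1.mul h2 :)

lemma Dv_apply (F F' : ℝ → ℝ) (y : EuclideanSpace ℝ (Fin n)) (j : Fin n) :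
    (Dv N F F' y) (EuclideanSpace.single j (1:ℝ)) =
      if j = N then F' (y N) * (SS N y - 1) else F (y N) * (2 * y j) := by
  simp only [Dv, ContinuousLinearMap.add_apply, ContinuousLinearMap.smul_apply, DS_apply,
    proj_apply', EuclideanSpace.single_apply, smul_eq_mul]
  by_cases h : j = N
  · simp [h]; ring
  · simp [h, Ne.symm h]

end euc

/-! ### The determinant of an "arrow" matrix -/

lemma det_arrow (n : ℕ) (hn : 2 ≤ n) (α d : ℝ) (hα : α ≠ 0) (w : Fin n → ℝ)
    (N : Fin n) (hN : (N : ℕ) = n - 1)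
    (M : Matrix (Fin n) (Fin n) ℝ)
    (hM : ∀ i j, M i j = if i = N then (if j = N then d else w j)
      else if j = N then w i else (if i = j then α else 0)) :
    M.det = α ^ (n-1) * d - α ^ (n-2) * ∑ i ∈ Finset.univ.erase N, w i ^ 2 := by
  have h1 : n - 1 + 1 = n := by omega
  let e : Fin (n-1) ⊕ Fin 1 ≃ Fin n := finSumFinEquiv.trans (finCongr h1)
  have einl : ∀ j : Fin (n-1), ((e (Sum.inl j) : Fin n) : ℕ) = (j : ℕ) := by
    intro j; simp [e, finSumFinEquiv]
  have einl_ne : ∀ j : Fin (n-1), e (Sum.inl j) ≠ N := by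
    intro j h
    have := einl j
    rw [h, hN] at this
    omega
  have einr : ∀ k : Fin 1, e (Sum.inr k) = N := by
    intro k
    have : ((e (Sum.inr k) : Fin n) : ℕ) = n - 1 := by
      simp [e, finSumFinEquiv, Fin.fin_one_eq_zero k]
    exact Fin.ext (by rw [this, hN])
  have hsub : M.submatrix e e = Matrix.fromBlocks (α • (1 : Matrix (Fin (n-1)) (Fin (n-1)) ℝ))
      (Matrix.of fun i (_ : Fin 1) => w (e (Sum.inl i)))
      (Matrix.of fun (_ : Fin 1) j => w (e (Sum.inl j)))
      (Matrix.of fun (_ : Fin 1) (_ : Fin 1) => d) := by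
    ext i j
    rcases i with i | i <;> rcases j with j | j <;>
      simp only [Matrix.submatrix_apply, Matrix.fromBlocks_apply₁₁, Matrix.fromBlocks_apply₁₂,
        Matrix.fromBlocks_apply₂₁, Matrix.fromBlocks_apply₂₂, hM, Matrix.of_apply]
    · rw [if_neg (einl_ne i), if_neg (einl_ne j)]
      have hiff : e (Sum.inl i) = e (Sum.inl j) ↔ i = j := by
        constructor
        · intro h; exact Sum.inl.inj (e.injective h)
        · intro h; rw [h]
      simp only [Matrix.smul_apply, Matrix.one_apply, smul_eq_mul]
      by_cases hij : i = j
      · rw [if_pos (hiff.mpr hij), if_pos hij, mul_one]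
      · rw [if_neg (fun hh => hij (hiff.mp hh)), if_neg hij, mul_zero]
    · rw [if_neg (einl_ne i), if_pos (einr j)]
    · rw [if_pos (einr i), if_neg (einl_ne j)]
    · rw [if_pos (einr i), if_pos (einr j)]
  have hcard : Fintype.card (Fin (n-1)) = n - 1 := Fintype.card_fin _
  haveI : Invertible (α • (1 : Matrix (Fin (n-1)) (Fin (n-1)) ℝ)) :=
    ⟨α⁻¹ • (1 : Matrix (Fin (n-1)) (Fin (n-1)) ℝ),
      by rw [Matrix.smul_mul, Matrix.mul_smul, Matrix.one_mul, smul_smul,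
        inv_mul_cancel₀ hα, one_smul],
      by rw [Matrix.smul_mul, Matrix.mul_smul, Matrix.one_mul, smul_smul,
        mul_inv_cancel₀ hα, one_smul]⟩
  have hdet : M.det = (M.submatrix e e).det := (Matrix.det_submatrix_equiv_self e M).symm
  rw [hdet, hsub, Matrix.det_fromBlocks₁₁]
  have hinv : (⅟(α • (1 : Matrix (Fin (n-1)) (Fin (n-1)) ℝ))) =
      α⁻¹ • (1 : Matrix (Fin (n-1)) (Fin (n-1)) ℝ) :=
    invOf_eq_right_inv (by rw [Matrix.smul_mul, Matrix.mul_smul, Matrix.one_mul, smul_smul,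
      mul_inv_cancel₀ hα, one_smul])
  rw [hinv]
  have hdetA : (α • (1 : Matrix (Fin (n-1)) (Fin (n-1)) ℝ)).det = α ^ (n-1) := by
    rw [Matrix.det_smul, Matrix.det_one, hcard, mul_one]
  rw [hdetA]
  have hsum : ∑ j : Fin (n-1), w (e (Sum.inl j)) ^ 2 = ∑ i ∈ Finset.univ.erase N, w i ^ 2 := by
    have h2 : ∑ i : Fin n, w i ^ 2 = ∑ p : Fin (n-1) ⊕ Fin 1, w (e p) ^ 2 :=
      (Fintype.sum_equiv e _ _ (fun p => rfl)).symm
    rw [Fintype.sum_sum_type] at h2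
    have h3 : ∑ k : Fin 1, w (e (Sum.inr k)) ^ 2 = w N ^ 2 := by
      simp [einr]
    have h4 : ∑ i ∈ Finset.univ.erase N, w i ^ 2 + w N ^ 2 = ∑ i : Fin n, w i ^ 2 :=
      Finset.sum_erase_add _ _ (Finset.mem_univ N)
    rw [h3] at h2
    linarith
  have hD : (Matrix.of (fun (_ : Fin 1) (_ : Fin 1) => d) -
      Matrix.of (fun (_ : Fin 1) j => w (e (Sum.inl j))) *
        (α⁻¹ • (1 : Matrix (Fin (n-1)) (Fin (n-1)) ℝ)) *
      Matrix.of (fun i (_ : Fin 1) => w (e (Sum.inl i)))).det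
      = d - α⁻¹ * ∑ j : Fin (n-1), w (e (Sum.inl j)) ^ 2 := by
    rw [Matrix.det_fin_one]
    simp only [Matrix.sub_apply, Matrix.mul_apply, Matrix.smul_apply, Matrix.one_apply,
      Matrix.of_apply, smul_eq_mul, Finset.mul_sum, Finset.sum_mul]
    congr 1
    apply Finset.sum_congr rfl
    intro x _
    rw [Finset.sum_eq_single x]
    · simp only [if_pos rfl, mul_one]
      ring_nf
      simp
    · intro b _ hb
      simp [hb]
    · simp
  rw [hD, hsum, mul_sub]
  congr 1
  rw [← mul_assoc]
  congr 1
  have h7 : n - 1 = (n - 2) + 1 := by omega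
  rw [h7, pow_succ, mul_assoc, mul_inv_cancel₀ hα, mul_one]

end Stmt13Aux

open Stmt13Aux Finset in
/-- The (not necessarily convex) supersolution
`v(x) = xₙ[(-log xₙ)^{1/n} - 1](|x'|² - 1)` satisfies `det D²v ≤ 2ⁿ xₙ^{n-2}`. -/
theorem stmt_13 (n : ℕ) (hn : 2 ≤ n)
    (Ω : Set (EuclideanSpace ℝ (Fin n))) (hΩo : IsOpen Ω)
    (hΩ : ∀ x ∈ Ω, 0 < x ⟨n - 1, by omega⟩ ∧ x ⟨n - 1, by omega⟩ < Real.exp (-1))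
    (v : EuclideanSpace ℝ (Fin n) → ℝ)
    (hv : v = fun x => x ⟨n - 1, by omega⟩ *
        ((-Real.log (x ⟨n - 1, by omega⟩)) ^ ((1 : ℝ) / n) - 1) *
        ((∑ i ∈ Finset.univ.erase (⟨n - 1, by omega⟩ : Fin n), x i ^ 2) - 1)) :
    ContDiffOn ℝ (⊤ : ℕ∞) v Ω ∧
    ∀ x ∈ Ω, hessianDet v x ≤ (2 : ℝ) ^ n * x ⟨n - 1, by omega⟩ ^ (n - 2) := by
  have hn1 : n - 1 < n := by omega
  set N : Fin n := ⟨n - 1, hn1⟩ with hNdef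
  set c : ℝ := 1 / n with hcdef
  have hveq : v = fun y => ff c (y N) * (SS N y - 1) := by
    rw [hv]; rfl
  -- the open slab
  set U : Set (EuclideanSpace ℝ (Fin n)) :=
    {y | 0 < y N ∧ y N < Real.exp (-1)} with hUdef
  have hUo : IsOpen U := by
    have : U = (fun y : EuclideanSpace ℝ (Fin n) => y N) ⁻¹' (Set.Ioo 0 (Real.exp (-1))) := by
      ext y; simp [hUdef, Set.mem_Ioo]
    rw [this]
    exact isOpen_Ioo.preimage (EuclideanSpace.proj (𝕜 := ℝ) N).continuous
  have hΩU : Ω ⊆ U := fun y hy => ⟨(hΩ y hy).1, (hΩ y hy).2⟩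
  constructor
  · -- smoothness
    intro x hx
    obtain ⟨ht0, ht1⟩ := hΩ x hx
    have hL1 : 1 < -Real.log (x N) := hL ht0 ht1
    have hsc : ContDiffAt ℝ (⊤ : ℕ∞) (ff c) (x N) := contDiffAt_ff ht0 hL1
    have hcomp : ContDiffAt ℝ (⊤ : ℕ∞) (fun y : EuclideanSpace ℝ (Fin n) => ff c (y N)) x := by
      have hp : ContDiff ℝ (⊤ : ℕ∞) (fun y : EuclideanSpace ℝ (Fin n) => y N) :=
        (EuclideanSpace.proj (𝕜 := ℝ) N).contDiff
      exact hsc.comp x hp.contDiffAt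
    have hSSc : ContDiff ℝ (⊤ : ℕ∞) (SS N) := by
      apply ContDiff.sum
      intro i _
      have hp : ContDiff ℝ (⊤ : ℕ∞) (fun y : EuclideanSpace ℝ (Fin n) => y i) :=
        (EuclideanSpace.proj (𝕜 := ℝ) i).contDiff
      exact hp.pow 2
    rw [hveq]
    exact (hcomp.mul (hSSc.contDiffAt.sub contDiffAt_const)).contDiffWithinAt
  · -- the determinant bound
    intro x hx
    obtain ⟨ht0, ht1⟩ := hΩ x hx
    have hL1 : 1 < -Real.log (x N) := hL ht0 ht1
    have hc0 : 0 < c := by rw [hcdef]; positivity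
    have hc1 : c < 1 := by
      rw [hcdef, div_lt_one (by positivity)]
      exact_mod_cast (by omega : 1 < n)
    set t : ℝ := x N with htdef
    have hF : 0 < ff c t := ff_pos hc0 ht0 hL1
    have hF2 : ff2 c t < 0 := ff2_neg hc0 hc1 ht0 hL1
    -- first derivative of v on U
    have hdv : ∀ y ∈ U, fderiv ℝ v y = Dv N (ff c) (ff1 c) y := by
      intro y hy
      rw [hveq]
      exact (hasFDerivAt_vgen N (ff c) (ff1 c) y
        (hasDerivAt_ff hy.1 (hL hy.1 hy.2))).fderiv
    -- the Hessian matrix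
    have hMM : hessianMatrix v x = Matrix.of fun i j =>
        if i = N then (if j = N then ff2 c t * (SS N x - 1) else 2 * x j * ff1 c t)
        else if j = N then 2 * x i * ff1 c t
        else (if i = j then 2 * ff c t else 0) := by
      ext i j
      show fderiv ℝ (fun y => fderiv ℝ v y (EuclideanSpace.single j 1)) x
          (EuclideanSpace.single i 1) = _
      have hev : (fun y => fderiv ℝ v y (EuclideanSpace.single j 1)) =ᶠ[nhds x]
          (fun y => if j = N then ff1 c (y N) * (SS N y - 1) else ff c (y N) * (2 * y j)) := by
        filter_upwards [hUo.mem_nhds (hΩU hx)] with y hy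
        rw [hdv y hy, Dv_apply]
      rw [hev.fderiv_eq]
      by_cases hj : j = N
      · -- column N
        have hfun : (fun y : EuclideanSpace ℝ (Fin n) =>
            if j = N then ff1 c (y N) * (SS N y - 1) else ff c (y N) * (2 * y j)) =
            fun y => ff1 c (y N) * (SS N y - 1) := by
          funext y; rw [if_pos hj]
        rw [hfun]
        have hd : HasFDerivAt (fun y : EuclideanSpace ℝ (Fin n) => ff1 c (y N) * (SS N y - 1))
            (Dv N (ff1 c) (ff2 c) x) x :=
          hasFDerivAt_vgen N (ff1 c) (ff2 c) x (hasDerivAt_ff1 ht0 hL1)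
        rw [hd.fderiv, Dv_apply, hj]
        by_cases hi : i = N
        · rw [if_pos hi, Matrix.of_apply, if_pos hi, if_pos rfl]
        · rw [if_neg hi, Matrix.of_apply, if_neg hi, if_pos rfl]
          ring
      · -- column j ≠ N
        have hfun : (fun y : EuclideanSpace ℝ (Fin n) =>
            if j = N then ff1 c (y N) * (SS N y - 1) else ff c (y N) * (2 * y j)) =
            fun y => ff c (y N) * (2 * y j) := by
          funext y; rw [if_neg hj]
        rw [hfun]
        have h1 : HasFDerivAt (fun z : EuclideanSpace ℝ (Fin n) => ff c (z N))
            (ff1 c t • (EuclideanSpace.proj (𝕜 := ℝ) N)) x := by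
          have hp : HasFDerivAt (fun z : EuclideanSpace ℝ (Fin n) => z N)
              (EuclideanSpace.proj (𝕜 := ℝ) N) x := (EuclideanSpace.proj (𝕜 := ℝ) N).hasFDerivAt
          exact (hasDerivAt_ff ht0 hL1).comp_hasFDerivAt x hp
        have h2 : HasFDerivAt (fun z : EuclideanSpace ℝ (Fin n) => 2 * z j)
            ((2:ℝ) • (EuclideanSpace.proj (𝕜 := ℝ) j)) x := by
          have hp : HasFDerivAt (fun z : EuclideanSpace ℝ (Fin n) => z j)
              (EuclideanSpace.proj (𝕜 := ℝ) j) x := (EuclideanSpace.proj (𝕜 := ℝ) j).hasFDerivAt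
          exact hp.const_mul 2
        have hd : HasFDerivAt (fun z : EuclideanSpace ℝ (Fin n) => ff c (z N) * (2 * z j))
            (ff c t • ((2:ℝ) • (EuclideanSpace.proj (𝕜 := ℝ) j)) +
              (2 * x j) • (ff1 c t • (EuclideanSpace.proj (𝕜 := ℝ) N))) x := (h1.mul h2 :)
        rw [hd.fderiv]
        simp only [ContinuousLinearMap.add_apply, ContinuousLinearMap.smul_apply,
          proj_apply', EuclideanSpace.single_apply, smul_eq_mul, Matrix.of_apply]
        by_cases hi : i = N
        · rw [if_pos hi, if_neg hj]
          rw [if_neg (fun hh : j = i => hj (by rw [hh, hi])), if_pos (by rw [hi])]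
          ring
        · rw [if_neg hi, if_neg hj]
          by_cases hij : i = j
          · rw [if_pos (hij ▸ rfl : j = i), if_neg (fun hh : N = i => hi (hh ▸ rfl)),
              if_pos hij]
            ring
          · rw [if_neg (fun hh : j = i => hij (hh ▸ rfl)),
              if_neg (fun hh : N = i => hi (hh ▸ rfl)), if_neg hij]
            ring
      -- determinant
    have hdet : hessianDet v x = (2 * ff c t) ^ (n-1) * (ff2 c t * (SS N x - 1)) -
        (2 * ff c t) ^ (n-2) * ∑ i ∈ Finset.univ.erase N, (2 * x i * ff1 c t) ^ 2 := by
      rw [hessianDet]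
      exact det_arrow n hn (2 * ff c t) (ff2 c t * (SS N x - 1)) (by positivity)
        (fun i => 2 * x i * ff1 c t) N rfl (hessianMatrix v x)
        (fun i j => by rw [hMM]; rfl)
    rw [hdet]
    -- final estimate
    set F := ff c t
    set F1 := ff1 c t
    set F2 := ff2 c t
    set S := SS N x with hSdef
    have hS : 0 ≤ S := Finset.sum_nonneg (fun i _ => sq_nonneg _)
    have hsum : ∑ i ∈ Finset.univ.erase N, (2 * x i * F1) ^ 2 = 4 * F1 ^ 2 * S := by
      rw [hSdef, SS, Finset.mul_sum]
      apply Finset.sum_congr rfl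
      intro i _
      ring
    rw [hsum]
    have hpow : (2*F)^(n-1) = (2*F)^(n-2) * (2*F) := by
      rw [← pow_succ]; congr 1; omega
    have hbr : 2*F*(F2*(S-1)) - 4*F1^2*S ≤ 2*F*(-F2) := by
      nlinarith [mul_nonneg hS (mul_pos hF (neg_pos.mpr hF2)).le,
        mul_nonneg hS (sq_nonneg F1)]
    have hA2 : (0:ℝ) ≤ (2*F)^(n-2) := by positivity
    have step1 : (2*F)^(n-1) * (F2*(S-1)) - (2*F)^(n-2) * (4*F1^2*S) ≤
        (2*F)^(n-2) * (2*F*(-F2)) := by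
      calc (2*F)^(n-1) * (F2*(S-1)) - (2*F)^(n-2) * (4*F1^2*S)
          = (2*F)^(n-2) * (2*F*(F2*(S-1)) - 4*F1^2*S) := by rw [hpow]; ring
        _ ≤ (2*F)^(n-2) * (2*F*(-F2)) := mul_le_mul_of_nonneg_left hbr hA2
    have step2 : (2*F)^(n-2) * (2*F*(-F2)) = 2^(n-1) * (F^(n-1) * (-F2)) := by
      calc (2*F)^(n-2) * (2*F*(-F2)) = ((2*F)^(n-2) * (2*F)) * (-F2) := by ring
        _ = (2*F)^(n-1) * (-F2) := by rw [← hpow]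
        _ = 2^(n-1) * (F^(n-1) * (-F2)) := by rw [mul_pow]; ring
    have hkey : F^(n-1) * (-F2) ≤ 2 * t^(n-2) := key_bound hn hcdef ht0 hL1
    have step3 : 2^(n-1) * (F^(n-1) * (-F2)) ≤ (2:ℝ)^n * t^(n-2) := by
      have h8 : (2:ℝ)^(n-1) * (2 * t^(n-2)) = 2^n * t^(n-2) := by
        rw [← mul_assoc, ← pow_succ]
        congr 2
        omega
      calc (2:ℝ)^(n-1) * (F^(n-1) * (-F2)) ≤ 2^(n-1) * (2 * t^(n-2)) :=
            mul_le_mul_of_nonneg_left hkey (by positivity)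
        _ = 2^n * t^(n-2) := h8
    calc (2*F)^(n-1) * (F2*(S-1)) - (2*F)^(n-2) * (4*F1^2*S)
        ≤ (2*F)^(n-2) * (2*F*(-F2)) := step1
      _ = 2^(n-1) * (F^(n-1) * (-F2)) := step2
      _ ≤ (2:ℝ)^n * t^(n-2) := step3
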